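/- Each eigenvalue Λ_i of the operator χ (in the one-dimensional Gaussian quadrature setup) is a root of every nonzero polynomial p of degree q+1 that is orthogonal to P_q. -/
import Mathlib


open MeasureTheory

/-- Theorem 8: each eigenvalue Λ of χ is a root of every nonzero
degree-(q+1) polynomial orthogonal to P_q. -/
theorem nodes_are_roots_of_orthogonal_polynomial (q : ℕ) (μ : Measure ℝ)
    (hint : ∀ p : Polynomial ℝ, Integrable (fun x => p.eval x) μ)
    (u : Polynomial ℝ) (hu : u.natDegree ≤ q) (Λ : ℝ)
    (heig : ∀ p : Polynomial ℝ, p.natDegree ≤ q →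
      ∫ x, (x * u.eval x - Λ * u.eval x) * p.eval x ∂μ = 0)
    (hnorm : ∫ x, u.eval x * u.eval x ∂μ = 1)
    (p : Polynomial ℝ) (hp0 : p ≠ 0) (hpdeg : p.natDegree = q + 1)
    (horthp : ∀ r : Polynomial ℝ, r.natDegree ≤ q →
      ∫ x, p.eval x * r.eval x ∂μ = 0) :
    p.eval Λ = 0 := by
  -- δ lemma: for any s of degree ≤ q+1, ∫ s·u = s(Λ)·∫ u
  have key : ∀ s : Polynomial ℝ, s.natDegree ≤ q + 1 →
      ∫ x, s.eval x * u.eval x ∂μ = s.eval Λ * ∫ x, u.eval x ∂μ := by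
    intro s hs
    obtain ⟨r, hr⟩ := Polynomial.X_sub_C_dvd_sub_C_eval (a := Λ) (p := s)
    have hrdeg : r.natDegree ≤ q := by
      by_cases hr0 : r = 0
      · simp [hr0]
      · have h1 : (s - Polynomial.C (s.eval Λ)).natDegree ≤ q + 1 := by
          refine le_trans (Polynomial.natDegree_sub_le _ _) ?_
          simp [hs]
        rw [hr, Polynomial.natDegree_mul (Polynomial.X_sub_C_ne_zero Λ) hr0,
          Polynomial.natDegree_X_sub_C] at h1
        omega
    have hpt : ∀ x : ℝ, s.eval x * u.eval x
        = (x * u.eval x - Λ * u.eval x) * r.eval x + s.eval Λ * u.eval x := by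
      intro x
      have := congrArg (Polynomial.eval x) hr
      simp only [Polynomial.eval_sub, Polynomial.eval_mul, Polynomial.eval_C,
        Polynomial.eval_X] at this
      linear_combination (Polynomial.eval x u) * this
    have hi1 : Integrable (fun x => (x * u.eval x - Λ * u.eval x) * r.eval x) μ := by
      refine (hint ((Polynomial.X - Polynomial.C Λ) * u * r)).congr
        (Filter.Eventually.of_forall fun x => ?_)
      simp only [Polynomial.eval_mul, Polynomial.eval_sub, Polynomial.eval_X,
        Polynomial.eval_C]
      ring
    have hi2 : Integrable (fun x => s.eval Λ * u.eval x) μ :=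
      (hint u).const_mul _
    calc ∫ x, s.eval x * u.eval x ∂μ
        = ∫ x, ((x * u.eval x - Λ * u.eval x) * r.eval x + s.eval Λ * u.eval x) ∂μ := by
          exact integral_congr_ae (Filter.Eventually.of_forall (fun x => hpt x))
      _ = (∫ x, (x * u.eval x - Λ * u.eval x) * r.eval x ∂μ)
          + ∫ x, s.eval Λ * u.eval x ∂μ := integral_add hi1 hi2
      _ = s.eval Λ * ∫ x, u.eval x ∂μ := by
          rw [heig r hrdeg, integral_const_mul]; ring
  have hone : u.eval Λ * ∫ x, u.eval x ∂μ = 1 := by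
    rw [← key u (hu.trans (Nat.le_succ q)), hnorm]
  have hu0 : (∫ x, u.eval x ∂μ) ≠ 0 := by
    intro h; rw [h, mul_zero] at hone; exact one_ne_zero hone.symm
  have hpu : p.eval Λ * ∫ x, u.eval x ∂μ = 0 := by
    rw [← key p hpdeg.le, horthp u hu]
  exact (mul_eq_zero.mp hpu).resolve_right hu0
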